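/- Let N(x) = x^{q^2+q+1} be the norm from F_{q^3} to F_q. For a, b ∈ F_{q^3} with N(a) = N(b) = 1, the F_q-subspaces C_a = {(x, a·x^{q^2}) : x ∈ F_{q^3}} and T_b = {(x, b·x^q) : x ∈ F_{q^3}} of F_{q^3} × F_{q^3} intersect in an F_q-subspace of dimension exactly 1. -/

import Mathlib

/-- Elements of `F` fixed by `x ↦ x ^ q` lie in the image of `K`. -/
private lemma aux_fixed_17 (q : ℕ) (hq2 : 2 ≤ q) (K F : Type*) [Field K] [Field F]
    [Algebra K F] [Fintype K] [Fintype F] (hK : Fintype.card K = q)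
    (t : F) (ht : t ^ q = t) : ∃ c : K, algebraMap K F c = t := by
  classical
  set P : Polynomial F := Polynomial.X ^ q - Polynomial.X with hP
  have hPne : P ≠ 0 := FiniteField.X_pow_card_sub_X_ne_zero F hq2
  have hdeg : P.natDegree = q := FiniteField.X_pow_card_sub_X_natDegree_eq F hq2
  set T : Finset F := Finset.univ.filter (fun t => t ^ q = t) with hT
  set I : Finset F := Finset.univ.image (algebraMap K F) with hI
  have hIT : I ⊆ T := by
    intro x hx
    simp only [hI, Finset.mem_image] at hx
    obtain ⟨c, -, rfl⟩ := hx
    simp only [hT, Finset.mem_filter, Finset.mem_univ, true_and]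
    rw [← map_pow, ← hK, FiniteField.pow_card]
  have hIcard : I.card = q := by
    rw [hI, Finset.card_image_of_injective _ (algebraMap K F).injective,
      Finset.card_univ, hK]
  have hTcard : T.card ≤ q := by
    have hsub : T ⊆ P.roots.toFinset := by
      intro x hx
      simp only [hT, Finset.mem_filter, Finset.mem_univ, true_and] at hx
      rw [Multiset.mem_toFinset, Polynomial.mem_roots hPne]
      simp [hP, Polynomial.IsRoot, hx]
    calc T.card ≤ P.roots.toFinset.card := Finset.card_le_card hsub
      _ ≤ Multiset.card P.roots := Multiset.toFinset_card_le _
      _ ≤ P.natDegree := Polynomial.card_roots' P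
      _ = q := hdeg
  have hTI : T = I := Finset.eq_of_subset_of_card_le hIT (hIcard ▸ hTcard) |>.symm
  have : t ∈ T := by simp [hT, ht]
  rw [hTI, hI] at this
  simpa using Finset.mem_image.mp this

/-- Existence of a nonzero common solution. -/
private lemma aux_exists_17 (q : ℕ) (hq2 : 2 ≤ q) (F : Type*) [Field F] [Fintype F]
    (hF : Fintype.card F = q ^ 3)
    (a b : F) (ha : a ^ (q ^ 2 + q + 1) = 1) (hb : b ^ (q ^ 2 + q + 1) = 1) :
    ∃ x₀ : F, x₀ ≠ 0 ∧ a * x₀ ^ q ^ 2 = b * x₀ ^ q := by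
  classical
  have ha0 : a ≠ 0 := by
    intro h; rw [h, zero_pow (by positivity)] at ha; exact zero_ne_one ha
  have hb0 : b ≠ 0 := by
    intro h; rw [h, zero_pow (by positivity)] at hb; exact zero_ne_one hb
  set ua : Fˣ := Units.mk0 a ha0 with hua
  set ub : Fˣ := Units.mk0 b hb0 with hub
  set c : Fˣ := ub * ua⁻¹ with hc
  have hcval : (c : F) = b * a⁻¹ := by simp [hc, hua, hub]
  have hcn : c ^ (q ^ 2 + q + 1) = 1 := by
    ext
    push_cast [hcval]
    rw [mul_pow, hb, one_mul, inv_pow, ha, inv_one]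
  obtain ⟨g, hg⟩ := IsCyclic.exists_generator (α := Fˣ)
  have horder : orderOf g = q ^ 3 - 1 := by
    rw [orderOf_eq_card_of_forall_mem_zpowers hg, Nat.card_eq_fintype_card,
      Fintype.card_units, hF]
  have hgone : g ^ ((q ^ 3 - 1 : ℕ) : ℤ) = 1 := by
    rw [zpow_natCast, ← horder, pow_orderOf_eq_one]
  have hq3 : ((q ^ 3 - 1 : ℕ) : ℤ) = ((q : ℤ) - 1) * ((q : ℤ) ^ 2 + q + 1) := by
    have h1 : 1 ≤ q ^ 3 := Nat.one_le_pow _ _ (by omega)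
    push_cast [h1]
    ring
  obtain ⟨k, hk⟩ := hg c
  have hk' : g ^ k = c := hk
  have hdvd : ((q ^ 3 - 1 : ℕ) : ℤ) ∣ k * ((q : ℤ) ^ 2 + q + 1) := by
    rw [show ((q ^ 3 - 1 : ℕ) : ℤ) = (orderOf g : ℤ) by rw [horder],
      orderOf_dvd_iff_zpow_eq_one, zpow_mul, hk',
      show ((q : ℤ) ^ 2 + q + 1) = ((q ^ 2 + q + 1 : ℕ) : ℤ) by push_cast; ring,
      zpow_natCast, hcn]
  have hdvd2 : ((q : ℤ) - 1) ∣ k := by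
    rw [hq3] at hdvd
    have hN : ((q : ℤ) ^ 2 + q + 1) ≠ 0 := by positivity
    exact (mul_dvd_mul_iff_right hN).mp hdvd
  obtain ⟨s, hs⟩ := hdvd2
  set x₀u : Fˣ := g ^ ((q : ℤ) ^ 2 * s) with hx0u
  have key : x₀u ^ (q ^ 2) = c * x₀u ^ q := by
    rw [hx0u, ← zpow_natCast (g ^ _), ← zpow_natCast (g ^ _) q, ← zpow_mul, ← zpow_mul, ← hk', hs]
    have hexp : (q : ℤ) ^ 2 * s * (q ^ 2 : ℕ) =
        (((q : ℤ) - 1) * s + (q : ℤ) ^ 2 * s * (q : ℕ)) + (s * ((q : ℤ) - 1)) * ((q ^ 3 - 1 : ℕ) : ℤ) := by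
      rw [hq3]; push_cast; ring
    rw [hexp, zpow_add, zpow_add,
      mul_comm (s * ((q:ℤ) - 1)) (((q ^ 3 - 1 : ℕ) : ℤ)),
      zpow_mul g (((q ^ 3 - 1 : ℕ) : ℤ)) (s * ((q:ℤ) - 1)), hgone, one_zpow, mul_one]
  refine ⟨(x₀u : F), Units.ne_zero _, ?_⟩
  have keyF : (x₀u : F) ^ (q ^ 2) = (b * a⁻¹) * (x₀u : F) ^ q := by
    have h := congrArg Units.val key
    push_cast [hcval] at h
    exact h
  rw [keyF]
  field_simp

/-- The Frobenius step: `t ^ (q^2) = t ^ q → t ^ q = t` in `F`. -/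
private lemma aux_frob_17 (q : ℕ) (hq : IsPrimePow q) (F : Type*) [Field F] [Fintype F]
    (hF : Fintype.card F = q ^ 3) :
    ∀ t : F, t ^ (q ^ 2) = t ^ q → t ^ q = t := by
  classical
  obtain ⟨p, kk, hp, hkk, hpk⟩ := hq
  have hpprime : p.Prime := hp.nat_prime
  haveI : Fact p.Prime := ⟨hpprime⟩
  have hq2 : 2 ≤ q := by
    rw [← hpk]; calc 2 ≤ p := hpprime.two_le
      _ ≤ p ^ kk := Nat.le_self_pow (by omega) p
  haveI hcharF : CharP F p := by
    have h1 : CharP F (ringChar F) := ringChar.charP F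
    have h2 : (ringChar F).Prime := CharP.char_is_prime F (ringChar F)
    have h3 : p ∣ Fintype.card F := by
      rw [hF, ← hpk, ← pow_mul]
      exact dvd_pow_self p (by positivity)
    have h4 : p ∣ ringChar F := (prime_dvd_char_iff_dvd_card p).mpr h3
    have h5 : ringChar F = p := ((Nat.prime_dvd_prime_iff_eq hpprime h2).mp h4).symm
    rwa [h5] at h1
  intro t h
  have h0 : (t ^ q - t) ^ q = 0 := by
    rw [← hpk, sub_pow_char_pow, hpk, ← pow_mul, ← pow_two, h, sub_self]
  exact sub_eq_zero.mp (pow_eq_zero_iff (n := q) (by omega) |>.mp h0)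

theorem stmt_17 (q : ℕ) (hq : IsPrimePow q) (K F : Type*) [Field K] [Field F]
    [Algebra K F] [Fintype K] [Fintype F]
    (hK : Fintype.card K = q) (hF : Fintype.card F = q ^ 3)
    (a b : F) (ha : a ^ (q ^ 2 + q + 1) = 1) (hb : b ^ (q ^ 2 + q + 1) = 1) :
    ∃ W : Submodule K (F × F),
      (W : Set (F × F)) =
        {p : F × F | ∃ x : F, p = (x, a * x ^ q ^ 2)} ∩
          {p : F × F | ∃ x : F, p = (x, b * x ^ q)} ∧
      Module.finrank K W = 1 := by
  classical
  have hq2 : 2 ≤ q := hq.two_le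
  have ha0 : a ≠ 0 := by
    intro h; rw [h, zero_pow (by positivity)] at ha; exact zero_ne_one ha
  obtain ⟨x₀, hx0, hmain⟩ := aux_exists_17 q hq2 F hF a b ha hb
  set v₀ : F × F := (x₀, a * x₀ ^ q ^ 2) with hv₀
  have hv0ne : v₀ ≠ 0 := fun h => hx0 (congrArg Prod.fst h)
  refine ⟨Submodule.span K {v₀}, ?_, finrank_span_singleton hv0ne⟩
  have halg : ∀ c : K, (algebraMap K F c) ^ q = algebraMap K F c := fun c => by
    rw [← map_pow, ← hK, FiniteField.pow_card]
  have halg2 : ∀ c : K, (algebraMap K F c) ^ (q ^ 2) = algebraMap K F c := fun c => by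
    rw [pow_two, pow_mul, halg, halg]
  ext pp
  simp only [SetLike.mem_coe, Submodule.mem_span_singleton, Set.mem_inter_iff, Set.mem_setOf_eq]
  constructor
  · rintro ⟨c, rfl⟩
    set e : F := algebraMap K F c with he
    have hsm : c • v₀ = (e * x₀, e * (a * x₀ ^ q ^ 2)) := by
      simp [hv₀, Prod.smul_mk, Algebra.smul_def, he]
    refine ⟨⟨e * x₀, ?_⟩, ⟨e * x₀, ?_⟩⟩
    · rw [hsm, Prod.mk.injEq]
      refine ⟨rfl, ?_⟩
      rw [mul_pow, halg2]
      ring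
    · rw [hsm, Prod.mk.injEq]
      refine ⟨rfl, ?_⟩
      rw [mul_pow, halg, hmain]
      ring
  · rintro ⟨⟨x, hx⟩, ⟨y, hy⟩⟩
    rw [hx, Prod.mk.injEq] at hy
    obtain ⟨h1, h2⟩ := hy
    subst h1
    -- h2 : a * x ^ q ^ 2 = b * x ^ q
    by_cases hxz : x = 0
    · refine ⟨0, ?_⟩
      rw [zero_smul, hx, hxz]
      simp [zero_pow (show q ^ 2 ≠ 0 by positivity)]
      rfl
    · set t : F := x * x₀⁻¹ with htdef
      have heq : a * (x ^ q ^ 2 * x₀ ^ q) = a * (x ^ q * x₀ ^ q ^ 2) := by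
        linear_combination x₀ ^ q * h2 - x ^ q * hmain
      have heq2 : x ^ q ^ 2 * x₀ ^ q = x ^ q * x₀ ^ q ^ 2 := mul_left_cancel₀ ha0 heq
      have ht2 : t ^ q ^ 2 = t ^ q := by
        rw [htdef, mul_pow, mul_pow, inv_pow, inv_pow]
        field_simp
        linear_combination heq2
      have htq : t ^ q = t := aux_frob_17 q hq F hF t ht2
      obtain ⟨c, hc⟩ := aux_fixed_17 q hq2 K F hK t htq
      refine ⟨c, ?_⟩
      have hxt : x = t * x₀ := by
        rw [htdef, inv_mul_cancel_right₀ hx0]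
      have ht22 : t ^ q ^ 2 = t := by rw [ht2, htq]
      have hsm2 : c • v₀ = (t * x₀, t * (a * x₀ ^ q ^ 2)) := by
        rw [hv₀, Prod.smul_mk, Algebra.smul_def, Algebra.smul_def, hc]
      rw [hsm2, hx, Prod.mk.injEq]
      refine ⟨hxt.symm, ?_⟩
      rw [hxt, mul_pow, ht22]
      ring
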